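/- Let C(z) be the formal power series satisfying C = 1 + zC² with C(0) = 1 (the Catalan generating function). Then for all n ≥ 0, (f_n(−z) − f_{n-1}(−z)·z·C(z)) · C(z)^n = 1 as formal power series. -/

import Mathlib

open Polynomial

/-- The Fibonacci polynomial `f_m(z) = ∑_{k=0}^{⌊m/2⌋} C(m-k,k) z^k` for `m ≥ 0`,
and `f_m = 0` for `m < 0`. -/
noncomputable def fibP (m : ℤ) : Polynomial ℚ :=
  if m < 0 then 0
  else ∑ k ∈ Finset.range (m.toNat / 2 + 1),
    Polynomial.C ((Nat.choose (m.toNat - k) k : ℚ)) * Polynomial.X ^ k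

/-- The polynomial `f_m(−z)`. -/
noncomputable def fibPneg (m : ℤ) : Polynomial ℚ := (fibP m).comp (-Polynomial.X)

lemma fibP_coeff (m j : ℕ) : (fibP (m : ℤ)).coeff j = (Nat.choose (m - j) j : ℚ) := by
  rw [fibP]
  rw [if_neg (by omega : ¬ (m:ℤ) < 0)]
  simp only [Int.toNat_natCast]
  rw [Polynomial.finset_sum_coeff]
  simp only [Polynomial.coeff_C_mul, Polynomial.coeff_X_pow, mul_ite, mul_one, mul_zero]
  rw [Finset.sum_ite_eq (Finset.range (m/2+1)) j]
  by_cases h : j ∈ Finset.range (m/2+1)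
  · simp [h]
  · simp only [h, if_false]
    have : Nat.choose (m - j) j = 0 := by
      apply Nat.choose_eq_zero_of_lt
      simp only [Finset.mem_range, not_lt] at h
      omega
    simp [this]

lemma fibP_rec (m : ℕ) : fibP ((m : ℤ) + 2) = fibP ((m : ℤ) + 1) + X * fibP m := by
  have h2 : ((m : ℤ) + 2) = ((m + 2 : ℕ) : ℤ) := by push_cast; ring
  have h1 : ((m : ℤ) + 1) = ((m + 1 : ℕ) : ℤ) := by push_cast; ring
  rw [h1, h2]
  ext j
  rw [Polynomial.coeff_add, fibP_coeff]
  cases j with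
  | zero =>
      simp only [fibP_coeff, Polynomial.mul_coeff_zero, Polynomial.coeff_X_zero, zero_mul,
        add_zero, Nat.sub_zero, Nat.choose_zero_right]
  | succ j =>
      rw [Polynomial.coeff_X_mul, fibP_coeff, fibP_coeff]
      by_cases h : j ≤ m
      · have e2 : m + 2 - (j+1) = (m - j) + 1 := by omega
        have e1 : m + 1 - (j+1) = m - j := by omega
        rw [e1, e2, Nat.choose_succ_succ]
        push_cast; ring
      · rw [Nat.choose_eq_zero_of_lt (by omega), Nat.choose_eq_zero_of_lt (by omega),
          Nat.choose_eq_zero_of_lt (by omega)]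
        norm_num

lemma fibP_zero : fibP 0 = 1 := by
  rw [show (0:ℤ) = ((0:ℕ):ℤ) by norm_num]
  ext j
  rw [fibP_coeff]
  cases j with
  | zero => simp
  | succ j =>
      rw [Nat.choose_eq_zero_of_lt (by omega)]
      simp [Polynomial.coeff_one]

lemma fibP_neg_one : fibP (-1) = 0 := by rw [fibP, if_pos]; norm_num

lemma fibP_one : fibP 1 = 1 := by
  rw [show (1:ℤ) = ((1:ℕ):ℤ) by norm_num]
  ext j
  rw [fibP_coeff]
  match j with
  | 0 => simp
  | 1 => rw [Nat.choose_eq_zero_of_lt (by omega)]; simp [Polynomial.coeff_one]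
  | (j+2) => rw [Nat.choose_eq_zero_of_lt (by omega)]; simp [Polynomial.coeff_one]

lemma fibPneg_zero : fibPneg 0 = 1 := by simp [fibPneg, fibP_zero]
lemma fibPneg_neg_one : fibPneg (-1) = 0 := by simp [fibPneg, fibP_neg_one]
lemma fibPneg_one : fibPneg 1 = 1 := by simp [fibPneg, fibP_one]

lemma fibPneg_rec (n : ℕ) :
    fibPneg ((n : ℤ) + 1) = fibPneg (n : ℤ) - X * fibPneg ((n : ℤ) - 1) := by
  cases n with
  | zero => simp [fibPneg_one, fibPneg_zero, show ((0:ℕ):ℤ) - 1 = -1 by norm_num, fibPneg_neg_one]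
  | succ m =>
      have e1 : ((m+1 : ℕ) : ℤ) + 1 = (m : ℤ) + 2 := by push_cast; ring
      have e2 : ((m+1 : ℕ) : ℤ) = (m : ℤ) + 1 := by push_cast; ring
      have e3 : ((m+1 : ℕ) : ℤ) - 1 = (m : ℤ) := by push_cast; ring
      rw [e1, e3, e2, fibPneg, fibPneg, fibPneg, fibP_rec, Polynomial.add_comp,
        Polynomial.mul_comp, Polynomial.X_comp]
      ring

/-- If C is the Catalan generating function (C = 1 + zC², C(0) = 1), then
(f_n(−z) − f_{n-1}(−z)·z·C(z))·C(z)^n = 1 for all n ≥ 0. -/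
theorem fibP_catalan_inverse (Cs : PowerSeries ℚ)
    (hC : Cs = 1 + PowerSeries.X * Cs ^ 2)
    (hC0 : PowerSeries.constantCoeff Cs = 1) (n : ℕ) :
    (((fibPneg (n : ℤ)) : PowerSeries ℚ)
        - ((fibPneg ((n : ℤ) - 1)) : PowerSeries ℚ) * PowerSeries.X * Cs)
      * Cs ^ n = 1 := by
  induction n with
  | zero =>
      norm_num [fibPneg_zero, show ((0:ℕ):ℤ) - 1 = -1 by norm_num, fibPneg_neg_one]
  | succ n ih =>
      have e1 : ((n+1 : ℕ) : ℤ) = (n : ℤ) + 1 := by push_cast; ring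
      have e2 : ((n+1 : ℕ) : ℤ) - 1 = (n : ℤ) := by push_cast; ring
      rw [e2, e1, pow_succ]
      have key : (((fibPneg ((n:ℤ)+1)) : PowerSeries ℚ)
          - ((fibPneg (n : ℤ)) : PowerSeries ℚ) * PowerSeries.X * Cs) * Cs
          = ((fibPneg (n : ℤ)) : PowerSeries ℚ)
            - ((fibPneg ((n : ℤ) - 1)) : PowerSeries ℚ) * PowerSeries.X * Cs := by
        have hXC : PowerSeries.X * Cs ^ 2 = Cs - 1 := by
          conv_rhs => rw [hC]
          ring
        rw [fibPneg_rec n]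
        push_cast [Polynomial.coe_sub, Polynomial.coe_mul, Polynomial.coe_X]
        calc ((fibPneg (n:ℤ) : PowerSeries ℚ) - PowerSeries.X * (fibPneg ((n:ℤ)-1) : PowerSeries ℚ)
              - (fibPneg (n:ℤ) : PowerSeries ℚ) * PowerSeries.X * Cs) * Cs
            = (fibPneg (n:ℤ) : PowerSeries ℚ) * Cs
              - PowerSeries.X * (fibPneg ((n:ℤ)-1) : PowerSeries ℚ) * Cs
              - (fibPneg (n:ℤ) : PowerSeries ℚ) * (PowerSeries.X * Cs ^ 2) := by ring
          _ = _ := by rw [hXC]; ring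
      rw [show (((fibPneg ((n:ℤ)+1)) : PowerSeries ℚ)
          - ((fibPneg (n : ℤ)) : PowerSeries ℚ) * PowerSeries.X * Cs) * (Cs ^ n * Cs)
          = ((((fibPneg ((n:ℤ)+1)) : PowerSeries ℚ)
          - ((fibPneg (n : ℤ)) : PowerSeries ℚ) * PowerSeries.X * Cs) * Cs) * Cs ^ n by ring,
        key, ih]
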